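/- arXiv:2602.05727 — 4 statements merged into one kernel-verified Lean document; each statement's English description precedes it below -/
import Mathlib

section
/- Consider the ODE system v' = -PC⁻¹D_xPv where H̄ = H₂C is symmetric positive definite, H̄P = PᵀH̄, and H₂D_x + (H₂D_x)ᵀ = B̄. Then any solution satisfies d/dt (vᵀH̄v) = -(Pv)ᵀ B̄ (Pv). -/
open Matrix

lemma hasDerivAt_comp_apply {n : ℕ} {v : ℝ → Fin n → ℝ} {d : Fin n → ℝ} {t : ℝ}
    (h : HasDerivAt v d t) (i : Fin n) :
    HasDerivAt (fun t => v t i) (d i) t := by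
  have := ((ContinuousLinearMap.proj (R := ℝ) (φ := fun _ : Fin n => ℝ) i).hasFDerivAt.comp t
    h.hasFDerivAt).hasDerivAt
  exact hasDerivAt_pi.1 h i

lemma hasDerivAt_quadForm {n : ℕ} (M : Matrix (Fin n) (Fin n) ℝ)
    {v : ℝ → Fin n → ℝ} {d : Fin n → ℝ} {t : ℝ} (h : HasDerivAt v d t) :
    HasDerivAt (fun t => v t ⬝ᵥ M.mulVec (v t))
      (d ⬝ᵥ M.mulVec (v t) + v t ⬝ᵥ M.mulVec d) t := by
  have key : HasDerivAt (fun t => ∑ i, v t i * ∑ j, M i j * v t j)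
      (∑ i, (d i * ∑ j, M i j * v t j + v t i * ∑ j, M i j * d j)) t := by
    apply HasDerivAt.fun_sum
    intro i _
    exact (hasDerivAt_comp_apply h i).mul
      (HasDerivAt.fun_sum fun j _ => (hasDerivAt_comp_apply h j).const_mul (M i j))
  have e1 : (fun t => ∑ i, v t i * ∑ j, M i j * v t j)
      = fun t => v t ⬝ᵥ M.mulVec (v t) := by
    funext s
    simp [dotProduct, Matrix.mulVec]
  have e2 : (∑ i, (d i * ∑ j, M i j * v t j + v t i * ∑ j, M i j * d j))
      = d ⬝ᵥ M.mulVec (v t) + v t ⬝ᵥ M.mulVec d := by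
    rw [Finset.sum_add_distrib]
    simp [dotProduct, Matrix.mulVec]
  rw [← e1, ← e2]
  exact key

theorem stmt_8 {n : ℕ} (C H2 Dx P Hbar Bbar : Matrix (Fin n) (Fin n) ℝ)
    (hHbar : Hbar = H2 * C)
    (hHpd : Hbar.PosDef) (hHs : Hbar.IsSymm)
    (hHP : Hbar * P = Pᵀ * Hbar) (hPP : P * P = P)
    (hBbar : Bbar = H2 * Dx + (H2 * Dx)ᵀ)
    (v : ℝ → Fin n → ℝ)
    (hv : ∀ t : ℝ, HasDerivAt v (-(P * C⁻¹ * Dx * P).mulVec (v t)) t) :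
    ∀ t : ℝ, HasDerivAt (fun t => v t ⬝ᵥ Hbar.mulVec (v t))
      (-(P.mulVec (v t) ⬝ᵥ Bbar.mulVec (P.mulVec (v t)))) t := by
  intro t
  -- C is invertible
  have hC0 : C.det ≠ 0 := by
    intro h
    have h2 := hHpd.det_pos
    rw [hHbar, Matrix.det_mul, h, mul_zero] at h2
    exact lt_irrefl 0 h2
  have hCC : C * C⁻¹ = 1 := Matrix.mul_nonsing_inv C (isUnit_iff_ne_zero.mpr hC0)
  set A := P * C⁻¹ * Dx * P with hA
  -- key matrix identities
  have hHA : Hbar * A = Pᵀ * (H2 * Dx) * P := by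
    calc Hbar * A = (Hbar * P) * (C⁻¹ * Dx * P) := by
          rw [hA]; noncomm_ring
      _ = Pᵀ * Hbar * (C⁻¹ * Dx * P) := by rw [hHP]
      _ = Pᵀ * H2 * (C * C⁻¹) * (Dx * P) := by rw [hHbar]; noncomm_ring
      _ = Pᵀ * (H2 * Dx) * P := by rw [hCC]; noncomm_ring
  have hAT : Aᵀ * Hbar = Pᵀ * (H2 * Dx)ᵀ * P := by
    calc Aᵀ * Hbar = Aᵀ * Hbarᵀ := by rw [hHs.eq]
      _ = (Hbar * A)ᵀ := (Matrix.transpose_mul _ _).symm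
      _ = (Pᵀ * (H2 * Dx) * P)ᵀ := by rw [hHA]
      _ = Pᵀ * (H2 * Dx)ᵀ * P := by
          simp [Matrix.transpose_mul, Matrix.mul_assoc]
  have hkey : Aᵀ * Hbar + Hbar * A = Pᵀ * Bbar * P := by
    rw [hAT, hHA, hBbar]
    noncomm_ring
  have hD := hasDerivAt_quadForm Hbar (hv t)
  convert hD using 1
  set w := v t with hw
  have l1 : w ⬝ᵥ (Aᵀ * Hbar).mulVec w = (A.mulVec w) ⬝ᵥ Hbar.mulVec w := by
    rw [← Matrix.mulVec_mulVec, Matrix.dotProduct_mulVec, Matrix.vecMul_transpose]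
  have l2 : w ⬝ᵥ (Hbar * A).mulVec w = w ⬝ᵥ Hbar.mulVec (A.mulVec w) := by
    rw [← Matrix.mulVec_mulVec]
  have l3 : w ⬝ᵥ (Pᵀ * Bbar * P).mulVec w
      = P.mulVec w ⬝ᵥ Bbar.mulVec (P.mulVec w) := by
    rw [← Matrix.mulVec_mulVec, ← Matrix.mulVec_mulVec, Matrix.dotProduct_mulVec,
      Matrix.vecMul_transpose]
  rw [← l3, ← hkey, Matrix.add_mulVec, dotProduct_add, l1, l2]
  simp [Matrix.mulVec_neg]
  ring
end

section
/- Let u : ℝ × [0,T] → ℝ² be a C¹ solution of C uₜ + A uₓ = 0 on [x_l, x_r] × [0,T], where C is a constant symmetric positive definite 2×2 matrix and A = [[α,1],[1,0]]. If u₁(x_l, t) = u₁(x_r, t) = 0 for all t, then the energy E(t) = ∫_{x_l}^{x_r} u(x,t)ᵀ C u(x,t) dx is constant in t. -/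
open Matrix MeasureTheory

theorem stmt_11 (α xl xr T : ℝ) (hx : xl ≤ xr) (hT : 0 ≤ T)
    (C : Matrix (Fin 2) (Fin 2) ℝ) (hC : C.PosDef) (hCs : C.IsSymm)
    (A : Matrix (Fin 2) (Fin 2) ℝ) (hA : A = !![α, 1; 1, 0])
    (u ut ux : ℝ → ℝ → Fin 2 → ℝ)
    (hcont : Continuous fun p : ℝ × ℝ => u p.1 p.2)
    (hcont_t : Continuous fun p : ℝ × ℝ => ut p.1 p.2)
    (hcont_x : Continuous fun p : ℝ × ℝ => ux p.1 p.2)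
    (hut : ∀ x t, HasDerivAt (fun τ => u x τ) (ut x t) t)
    (hux : ∀ x t, HasDerivAt (fun ξ => u ξ t) (ux x t) x)
    (hPDE : ∀ x t, C.mulVec (ut x t) + A.mulVec (ux x t) = 0)
    (hbcl : ∀ t, u xl t 0 = 0) (hbcr : ∀ t, u xr t 0 = 0) :
    ∀ s t, s ∈ Set.Icc 0 T → t ∈ Set.Icc 0 T →
      (∫ x in xl..xr, u x s ⬝ᵥ C.mulVec (u x s)) =
      ∫ x in xl..xr, u x t ⬝ᵥ C.mulVec (u x t) := by
  subst hA
  -- symmetry of C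
  have hCsym : C 1 0 = C 0 1 := by simpa using congrFun (congrFun hCs.eq 0) 1
  -- component derivatives
  have hut' : ∀ x t (i : Fin 2), HasDerivAt (fun τ => u x τ i) (ut x t i) t :=
    fun x t i => hasDerivAt_pi.1 (hut x t) i
  have hux' : ∀ x t (i : Fin 2), HasDerivAt (fun ξ => u ξ t i) (ux x t i) x :=
    fun x t i => hasDerivAt_pi.1 (hux x t) i
  -- scalar form of the PDE
  have hPDE0 : ∀ x t, C 0 0 * ut x t 0 + C 0 1 * ut x t 1 + (α * ux x t 0 + ux x t 1) = 0 := by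
    intro x t
    have h0 := congrFun (hPDE x t) 0
    simp [Matrix.mulVec, dotProduct, Fin.sum_univ_two] at h0
    linarith
  have hPDE1 : ∀ x t, C 1 0 * ut x t 0 + C 1 1 * ut x t 1 + ux x t 0 = 0 := by
    intro x t
    have h1 := congrFun (hPDE x t) 1
    simp [Matrix.mulVec, dotProduct, Fin.sum_univ_two] at h1
    linarith
  -- the time derivative of the energy density
  set Ft : ℝ → ℝ → ℝ :=
    fun x τ => ut x τ ⬝ᵥ C.mulVec (u x τ) + u x τ ⬝ᵥ C.mulVec (ut x τ) with hFtdef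
  have hFt : ∀ x τ, HasDerivAt (fun τ => u x τ ⬝ᵥ C.mulVec (u x τ)) (Ft x τ) τ := by
    intro x τ
    simp only [hFtdef, Matrix.mulVec, dotProduct, Fin.sum_univ_two]
    have h := hut' x τ
    have H := ((h 0).mul (((h 0).const_mul (C 0 0)).add ((h 1).const_mul (C 0 1)))).add
      ((h 1).mul (((h 0).const_mul (C 1 0)).add ((h 1).const_mul (C 1 1))))
    exact H.congr_deriv (by simp only [Pi.add_apply]; ring)
  -- joint continuity of Ft
  have cu : ∀ i : Fin 2, Continuous fun p : ℝ × ℝ => u p.1 p.2 i :=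
    fun i => (continuous_apply i).comp hcont
  have cut : ∀ i : Fin 2, Continuous fun p : ℝ × ℝ => ut p.1 p.2 i :=
    fun i => (continuous_apply i).comp hcont_t
  have hFtc : Continuous fun p : ℝ × ℝ => Ft p.1 p.2 := by
    simp only [hFtdef, Matrix.mulVec, dotProduct, Fin.sum_univ_two]
    fun_prop
  -- Ft is the spatial derivative of -(u ⬝ A u)
  have hGx : ∀ τ x, HasDerivAt
      (fun ξ => -(u ξ τ ⬝ᵥ (!![α, 1; 1, 0]).mulVec (u ξ τ))) (Ft x τ) x := by
    intro τ x
    have h : ∀ i : Fin 2, HasDerivAt (fun ξ => u ξ τ i) (ux x τ i) x := fun i => hux' x τ i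
    have H := (((h 0).mul (((h 0).const_mul α).add ((h 1).const_mul 1))).add
        ((h 1).mul (((h 0).const_mul 1).add ((h 1).const_mul 0)))).neg
    simp only [hFtdef, Matrix.mulVec, dotProduct, Fin.sum_univ_two, Matrix.of_apply,
      Matrix.cons_val', Matrix.cons_val_zero, Matrix.cons_val_one, Matrix.head_cons,
      Matrix.head_fin_const, Matrix.empty_val', Matrix.cons_val_fin_one]
    refine H.congr_deriv ?_
    simp only [Pi.add_apply]
    symm
    linear_combination 2 * u x τ 0 * hPDE0 x τ + 2 * u x τ 1 * hPDE1 x τ +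
      (u x τ 0 * ut x τ 1 - u x τ 1 * ut x τ 0) * hCsym
  -- the spatial integral of Ft vanishes
  have hinner : ∀ τ, (∫ x in xl..xr, Ft x τ) = 0 := by
    intro τ
    have hint : IntervalIntegrable (fun x => Ft x τ) volume xl xr :=
      (hFtc.comp (continuous_id.prodMk continuous_const)).intervalIntegrable xl xr
    have := intervalIntegral.integral_eq_sub_of_hasDerivAt
      (f := fun ξ => -(u ξ τ ⬝ᵥ (!![α, 1; 1, 0]).mulVec (u ξ τ)))
      (fun x _ => hGx τ x) hint
    have hl : u xl τ ⬝ᵥ (!![α, 1; 1, 0]).mulVec (u xl τ) = 0 := by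
      simp [Matrix.mulVec, dotProduct, Fin.sum_univ_two, hbcl τ]
    have hr : u xr τ ⬝ᵥ (!![α, 1; 1, 0]).mulVec (u xr τ) = 0 := by
      simp [Matrix.mulVec, dotProduct, Fin.sum_univ_two, hbcr τ]
    rw [this]
    rw [hl, hr]
    ring
  -- core claim for s ≤ t
  have key : ∀ s t : ℝ, s ≤ t →
      (∫ x in xl..xr, u x s ⬝ᵥ C.mulVec (u x s)) =
      ∫ x in xl..xr, u x t ⬝ᵥ C.mulVec (u x t) := by
    intro s t hst
    have hFc : ∀ σ : ℝ, Continuous fun x => u x σ ⬝ᵥ C.mulVec (u x σ) := by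
      intro σ
      simp only [Matrix.mulVec, dotProduct, Fin.sum_univ_two]
      have : ∀ i : Fin 2, Continuous fun x : ℝ => u x σ i :=
        fun i => (cu i).comp (continuous_id.prodMk continuous_const)
      fun_prop
    have hFint : ∀ σ : ℝ, IntervalIntegrable (fun x => u x σ ⬝ᵥ C.mulVec (u x σ)) volume xl xr :=
      fun σ => (hFc σ).intervalIntegrable xl xr
    have hdiff : (∫ x in xl..xr, u x t ⬝ᵥ C.mulVec (u x t)) -
        (∫ x in xl..xr, u x s ⬝ᵥ C.mulVec (u x s)) = 0 := by
      rw [← intervalIntegral.integral_sub (hFint t) (hFint s)]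
      have hFTC : ∀ x : ℝ, u x t ⬝ᵥ C.mulVec (u x t) - u x s ⬝ᵥ C.mulVec (u x s)
          = ∫ τ in Set.Ioc s t, Ft x τ := by
        intro x
        have hi : IntervalIntegrable (fun τ => Ft x τ) volume s t :=
          (hFtc.comp (continuous_const.prodMk continuous_id)).intervalIntegrable s t
        rw [← intervalIntegral.integral_of_le hst,
          intervalIntegral.integral_eq_sub_of_hasDerivAt (fun τ _ => hFt x τ) hi]
      calc (∫ x in xl..xr, (u x t ⬝ᵥ C.mulVec (u x t) - u x s ⬝ᵥ C.mulVec (u x s)))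
          = ∫ x in Set.Ioc xl xr, ∫ τ in Set.Ioc s t, Ft x τ := by
            rw [intervalIntegral.integral_of_le hx]
            exact setIntegral_congr_fun measurableSet_Ioc (fun x _ => hFTC x)
        _ = ∫ τ in Set.Ioc s t, ∫ x in Set.Ioc xl xr, Ft x τ := by
            apply MeasureTheory.integral_integral_swap
            rw [Measure.prod_restrict]
            exact (hFtc.continuousOn.integrableOn_compact
              (isCompact_Icc.prod isCompact_Icc)).mono_set
              (Set.prod_mono Set.Ioc_subset_Icc_self Set.Ioc_subset_Icc_self)
        _ = 0 := by
            have : ∀ τ, (∫ x in Set.Ioc xl xr, Ft x τ) = 0 := by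
              intro τ
              rw [← intervalIntegral.integral_of_le hx]; exact hinner τ
            simp [this]
    linarith
  intro s t _ _
  rcases le_total s t with h | h
  · exact key s t h
  · exact (key t s h).symm
end

section
/- The 2m×2m matrix H₂D_x with D_x = [[αD₋, D₊],[D₋, 0]] and H₂ = I₂ ⊗ H satisfies H₂D_x + (H₂D_x)ᵀ = [[-2αS + αB, B],[B, 0]], where S = (Q₊+Q₊ᵀ)/2, provided D± = H⁻¹(Q± + B/2), Q₊ + Q₋ᵀ = 0, H symmetric, and B symmetric. -/
open Matrix

theorem stmt_15 {m : ℕ} (H Qp Qm B : Matrix (Fin m) (Fin m) ℝ)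
    (hH : IsUnit H) (hHs : H.IsSymm) (hBs : B.IsSymm)
    (hQ : Qp + Qmᵀ = 0) (α : ℝ)
    (Dp Dm S : Matrix (Fin m) (Fin m) ℝ)
    (hDp : Dp = H⁻¹ * (Qp + (1 / 2 : ℝ) • B))
    (hDm : Dm = H⁻¹ * (Qm + (1 / 2 : ℝ) • B))
    (hS : S = (1 / 2 : ℝ) • (Qp + Qpᵀ))
    (H2 Dx : Matrix (Fin m ⊕ Fin m) (Fin m ⊕ Fin m) ℝ)
    (hH2 : H2 = Matrix.fromBlocks H 0 0 H)
    (hDx : Dx = Matrix.fromBlocks (α • Dm) Dp Dm 0) :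
    H2 * Dx + (H2 * Dx)ᵀ = Matrix.fromBlocks ((-(2 * α)) • S + α • B) B B 0 := by
  have hdet : IsUnit H.det := (Matrix.isUnit_iff_isUnit_det H).mp hH
  have hDp' : H * Dp = Qp + (1 / 2 : ℝ) • B := by
    rw [hDp, Matrix.mul_nonsing_inv_cancel_left _ _ hdet]
  have hDm' : H * Dm = Qm + (1 / 2 : ℝ) • B := by
    rw [hDm, Matrix.mul_nonsing_inv_cancel_left _ _ hdet]
  have hQm : Qm = -Qpᵀ := by
    have h1 : Qmᵀ = -Qp := by linear_combination (norm := abel) hQ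
    calc Qm = Qmᵀᵀ := (Matrix.transpose_transpose Qm).symm
      _ = -Qpᵀ := by rw [h1, Matrix.transpose_neg]
  have hB : ∀ i j, B j i = B i j := fun i j => congrFun (congrFun hBs.eq i) j
  subst hH2 hDx hS
  rw [Matrix.fromBlocks_multiply, Matrix.fromBlocks_transpose, Matrix.fromBlocks_add,
    Matrix.fromBlocks_inj]
  refine ⟨?_, ?_, ?_, ?_⟩ <;>
  · simp only [Matrix.mul_smul, Matrix.mul_zero, Matrix.zero_mul, add_zero,
      zero_add, smul_zero, hDp', hDm', hQm]
    ext i j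
    simp only [Matrix.add_apply, Matrix.smul_apply, Matrix.neg_apply, Matrix.transpose_apply,
      Matrix.zero_apply, smul_eq_mul, hB i j]
    try ring
end

section
/- Suppose v : ℝ → ℝⁿ satisfies v' = -PC⁻¹D_xPv with H̄ = H₂C symmetric positive definite, H̄P = PᵀH̄, and (Pv)ᵀ(H₂D_x + (H₂D_x)ᵀ)(Pv) ≥ 0 for all v. Then t ↦ v(t)ᵀH̄v(t) is non-increasing; in particular the semi-discrete scheme is energy stable. -/
open Matrix

private lemma dp_swap {n : ℕ} (A : Matrix (Fin n) (Fin n) ℝ) (a b : Fin n → ℝ) :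
    a ⬝ᵥ A.mulVec b = b ⬝ᵥ Aᵀ.mulVec a := by
  rw [Matrix.dotProduct_mulVec, dotProduct_comm, Matrix.mulVec_transpose]

private lemma quad_transpose {n : ℕ} (A : Matrix (Fin n) (Fin n) ℝ) (x : Fin n → ℝ) :
    x ⬝ᵥ Aᵀ.mulVec x = x ⬝ᵥ A.mulVec x := by
  rw [Matrix.mulVec_transpose, Matrix.dotProduct_mulVec, dotProduct_comm]

private lemma hasDerivAt_quad {n : ℕ} (A : Matrix (Fin n) (Fin n) ℝ)
    (v : ℝ → Fin n → ℝ) (v' : Fin n → ℝ) (t : ℝ)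
    (hv : ∀ i, HasDerivAt (fun s => v s i) (v' i) t) :
    HasDerivAt (fun s => v s ⬝ᵥ A.mulVec (v s))
      (v' ⬝ᵥ A.mulVec (v t) + v t ⬝ᵥ A.mulVec v') t := by
  have h1 : (fun s => v s ⬝ᵥ A.mulVec (v s))
      = fun s => ∑ i, ∑ j, v s i * (A i j * v s j) := by
    funext s
    simp [dotProduct, Matrix.mulVec, Finset.mul_sum]
  have h2 : v' ⬝ᵥ A.mulVec (v t) + v t ⬝ᵥ A.mulVec v'
      = ∑ i, ∑ j, (v' i * (A i j * v t j) + v t i * (A i j * v' j)) := by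
    simp [dotProduct, Matrix.mulVec, Finset.mul_sum, Finset.sum_add_distrib]
  rw [h1, h2]
  apply HasDerivAt.fun_sum
  intro i _
  apply HasDerivAt.fun_sum
  intro j _
  exact (hv i).mul ((hv j).const_mul (A i j))

theorem stmt_16 {n : ℕ} (C H2 Dx P Hbar : Matrix (Fin n) (Fin n) ℝ)
    (hC : IsUnit C)
    (hHbar : Hbar = H2 * C)
    (hHpd : Hbar.PosDef) (hHs : Hbar.IsSymm)
    (hHP : Hbar * P = Pᵀ * Hbar)
    (hpos : ∀ w : Fin n → ℝ,
      0 ≤ P.mulVec w ⬝ᵥ (H2 * Dx + (H2 * Dx)ᵀ).mulVec (P.mulVec w))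
    (v : ℝ → Fin n → ℝ)
    (hv : ∀ t : ℝ, HasDerivAt v (-(P * C⁻¹ * Dx * P).mulVec (v t)) t) :
    ∀ s t : ℝ, s ≤ t →
      v t ⬝ᵥ Hbar.mulVec (v t) ≤ v s ⬝ᵥ Hbar.mulVec (v s) := by
  have hCC : C * C⁻¹ = 1 := Matrix.mul_nonsing_inv C ((Matrix.isUnit_iff_isUnit_det C).mp hC)
  have hkey : Hbar * (P * C⁻¹ * Dx * P) = Pᵀ * ((H2 * Dx) * P) := by
    have h1 : Hbar * (P * C⁻¹ * Dx * P) = (Hbar * P) * (C⁻¹ * (Dx * P)) := by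
      simp only [Matrix.mul_assoc]
    rw [h1, hHP, hHbar]
    simp only [Matrix.mul_assoc]
    rw [← Matrix.mul_assoc C C⁻¹, hCC, Matrix.one_mul]
  set E : ℝ → ℝ := fun s => v s ⬝ᵥ Hbar.mulVec (v s) with hE
  have hderiv : ∀ t : ℝ, HasDerivAt E
      (-(P.mulVec (v t) ⬝ᵥ ((H2 * Dx) + (H2 * Dx)ᵀ).mulVec (P.mulVec (v t)))) t := by
    intro t
    set v' : Fin n → ℝ := -(P * C⁻¹ * Dx * P).mulVec (v t) with hv'
    have hvi : ∀ i, HasDerivAt (fun s => v s i) (v' i) t :=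
      fun i => (hasDerivAt_pi.mp (hv t)) i
    have hd := hasDerivAt_quad Hbar v v' t hvi
    have hsym : v' ⬝ᵥ Hbar.mulVec (v t) = v t ⬝ᵥ Hbar.mulVec v' := by
      rw [dp_swap, hHs]
    have hA : v t ⬝ᵥ Hbar.mulVec v' = -(P.mulVec (v t) ⬝ᵥ (H2 * Dx).mulVec (P.mulVec (v t))) := by
      rw [hv', Matrix.mulVec_neg, dotProduct_neg, Matrix.mulVec_mulVec, hkey]
      congr 1
      rw [← Matrix.mulVec_mulVec, Matrix.dotProduct_mulVec, Matrix.vecMul_transpose,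
        ← Matrix.mulVec_mulVec]
    have heq : v' ⬝ᵥ Hbar.mulVec (v t) + v t ⬝ᵥ Hbar.mulVec v'
        = -(P.mulVec (v t) ⬝ᵥ ((H2 * Dx) + (H2 * Dx)ᵀ).mulVec (P.mulVec (v t))) := by
      rw [hsym, hA, Matrix.add_mulVec, dotProduct_add, quad_transpose]
      ring
    rw [heq] at hd
    exact hd
  have hdiff : Differentiable ℝ E := fun t => (hderiv t).differentiableAt
  have hnonpos : ∀ t, deriv E t ≤ 0 := by
    intro t
    rw [(hderiv t).deriv]
    simpa using hpos (v t)
  intro s t hst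
  exact antitone_of_deriv_nonpos hdiff hnonpos hst
end
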